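/- Any continuous piecewise-linear interpolant of M ≥ 2 data points (x_m, z_m) with x₁ < ... < x_M has second-order total variation (total variation of its derivative) at least Σ_{m=2}^{M-1} | s_m − s_{m-1} |, where s_m = (z_{m+1}-z_m)/(x_{m+1}-x_m). In other words, the canonical interpolant minimizes the second-order total variation among all piecewise-linear interpolants. -/

import Mathlib

open Set

/-- If a continuous function has positive derivative on an open interval off a finite
exceptional set, it increases over the interval. -/
private lemma lt_of_deriv_pos_off_finite (f g : ℝ → ℝ) (hfc : Continuous f) :
    ∀ (n : ℕ) (K : Finset ℝ), K.card ≤ n → ∀ a b : ℝ, a < b →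
      (∀ t ∈ Set.Ioo a b, t ∉ K → HasDerivAt f (g t) t) →
      (∀ t ∈ Set.Ioo a b, t ∉ K → 0 < g t) → f a < f b := by
  have base : ∀ (K : Finset ℝ) (a b : ℝ), a < b →
      (∀ t ∈ Set.Ioo a b, t ∉ K → HasDerivAt f (g t) t) →
      (∀ t ∈ Set.Ioo a b, t ∉ K → 0 < g t) →
      (∀ t ∈ Set.Ioo a b, t ∉ K) → f a < f b := by
    intro K a b hab hder hpos hfree
    have h1 : StrictMonoOn f (Set.Icc a b) := by
      apply strictMonoOn_of_deriv_pos (convex_Icc a b) hfc.continuousOn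
      intro t ht
      rw [interior_Icc] at ht
      rw [(hder t ht (hfree t ht)).deriv]
      exact hpos t ht (hfree t ht)
    exact h1 (Set.left_mem_Icc.mpr hab.le) (Set.right_mem_Icc.mpr hab.le) hab
  intro n
  induction n with
  | zero =>
    intro K hK a b hab hder hpos
    have hKe : K = ∅ := Finset.card_eq_zero.mp (Nat.le_zero.mp hK)
    subst hKe
    exact base ∅ a b hab hder hpos (by simp)
  | succ n ih =>
    intro K hK a b hab hder hpos
    by_cases hc : ∃ c ∈ K, c ∈ Set.Ioo a b
    · obtain ⟨c, hcK, hc1, hc2⟩ := hc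
      have hcard : (K.erase c).card ≤ n := by
        have := Finset.card_erase_of_mem hcK
        omega
      have hL : f a < f c := by
        refine ih (K.erase c) hcard a c hc1 ?_ ?_
        · intro t ht htK
          refine hder t ⟨ht.1, ht.2.trans hc2⟩ fun htc =>
            htK (Finset.mem_erase.mpr ⟨ne_of_lt ht.2, htc⟩)
        · intro t ht htK
          refine hpos t ⟨ht.1, ht.2.trans hc2⟩ fun htc =>
            htK (Finset.mem_erase.mpr ⟨ne_of_lt ht.2, htc⟩)
      have hR : f c < f b := by
        refine ih (K.erase c) hcard c b hc2 ?_ ?_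
        · intro t ht htK
          refine hder t ⟨hc1.trans ht.1, ht.2⟩ fun htc =>
            htK (Finset.mem_erase.mpr ⟨ne_of_gt ht.1, htc⟩)
        · intro t ht htK
          refine hpos t ⟨hc1.trans ht.1, ht.2⟩ fun htc =>
            htK (Finset.mem_erase.mpr ⟨ne_of_gt ht.1, htc⟩)
      exact hL.trans hR
    · push_neg at hc
      exact base K a b hab hder hpos fun t ht htK => hc t htK ht

/-- Mean value property from below: some point of the open interval has `g` at most
the secant slope. -/
private lemma exists_le_slope (f g : ℝ → ℝ) (hfc : Continuous f) (K : Finset ℝ)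
    (hder : ∀ t, t ∉ K → HasDerivAt f (g t) t) (a b : ℝ) (hab : a < b) :
    ∃ t ∈ Set.Ioo a b, g t ≤ (f b - f a) / (b - a) := by
  by_contra h
  push_neg at h
  set C := (f b - f a) / (b - a) with hC
  have key : f a - C * a < f b - C * b := by
    refine lt_of_deriv_pos_off_finite (fun t => f t - C * t) (fun t => g t - C) ?_ K.card K
      le_rfl a b hab ?_ ?_
    · exact hfc.sub (continuous_const.mul continuous_id)
    · intro t _ htK
      exact ((hder t htK).sub ((hasDerivAt_id t).const_mul C)).congr_deriv (by ring)
    · intro t ht _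
      have := h t ht
      show 0 < g t - C
      linarith
  have hb : b - a ≠ 0 := sub_ne_zero.mpr hab.ne'
  have hCe : C * (b - a) = f b - f a := by
    rw [hC]; field_simp
  nlinarith [key]

/-- Mean value property from above. -/
private lemma exists_ge_slope (f g : ℝ → ℝ) (hfc : Continuous f) (K : Finset ℝ)
    (hder : ∀ t, t ∉ K → HasDerivAt f (g t) t) (a b : ℝ) (hab : a < b) :
    ∃ t ∈ Set.Ioo a b, (f b - f a) / (b - a) ≤ g t := by
  obtain ⟨t, ht, hgt⟩ := exists_le_slope (fun y => -f y) (fun y => -g y) hfc.neg K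
    (fun t htK => (hder t htK).neg) a b hab
  refine ⟨t, ht, ?_⟩
  have heq : (-f b - -f a) / (b - a) = -((f b - f a) / (b - a)) := by ring
  rw [heq] at hgt
  linarith

private lemma ofReal_le_edist (A : ℝ) (p q : ℝ) (h : A ≤ |p - q|) :
    ENNReal.ofReal A ≤ edist p q := by
  rw [edist_dist, Real.dist_eq]
  exact ENNReal.ofReal_le_ofReal h

private lemma var_step (g : ℝ → ℝ) {a b : ℝ} (hab : a ≤ b) :
    edist (g a) (g b) + eVariationOn g (Set.Ici b) ≤ eVariationOn g (Set.Ici a) := by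
  rw [← Set.Icc_union_Ici_eq_Ici hab,
    eVariationOn.union g ⟨Set.right_mem_Icc.mpr hab, fun y hy => hy.2⟩ isLeast_Ici]
  exact add_le_add_left
    (eVariationOn.edist_le g (Set.left_mem_Icc.mpr hab) (Set.right_mem_Icc.mpr hab)) _

/-- The core combinatorial induction: given, in each interval, a point `u m` where `g`
is below the secant slope `s m` and a point `v m` where it is above, the total variation
of `g` on a right half-line dominates the tail sum of slope jumps plus the starting slack. -/
private lemma core (g : ℝ → ℝ) (s : ℕ → ℝ) (u v : ℕ → ℝ) (M : ℕ)
    (hu : ∀ m, m + 1 < M → g (u m) ≤ s m) (hv : ∀ m, m + 1 < M → s m ≤ g (v m))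
    (huu : ∀ m, m + 2 < M → u m < u (m + 1)) (huv : ∀ m, m + 2 < M → u m < v (m + 1))
    (hvu : ∀ m, m + 2 < M → v m < u (m + 1)) (hvv : ∀ m, m + 2 < M → v m < v (m + 1)) :
    ∀ k m, m + k + 3 = M →
      ((s m ≤ s (m + 1) →
         ENNReal.ofReal ((∑ i ∈ Finset.Ico m (M - 2), |s (i + 1) - s i|) + (s m - g (u m))) ≤
           eVariationOn g (Set.Ici (u m))) ∧
       (s (m + 1) ≤ s m →
         ENNReal.ofReal ((∑ i ∈ Finset.Ico m (M - 2), |s (i + 1) - s i|) + (g (v m) - s m)) ≤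
           eVariationOn g (Set.Ici (v m)))) := by
  intro k
  induction k with
  | zero =>
    intro m hm
    have hM2 : M - 2 = m + 1 := by omega
    have h2 : m + 2 < M := by omega
    have h1 : m + 1 < M := by omega
    have h1' : m + 1 + 1 < M := by omega
    rw [hM2]
    have hsum : ∑ i ∈ Finset.Ico m (m + 1), |s (i + 1) - s i| = |s (m + 1) - s m| := by
      rw [Nat.Ico_succ_singleton, Finset.sum_singleton]
    rw [hsum]
    constructor
    · intro hdir
      have habs : |s (m + 1) - s m| = s (m + 1) - s m := abs_of_nonneg (by linarith)
      refine le_trans (ofReal_le_edist _ (g (u m)) (g (v (m + 1))) ?_)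
        (eVariationOn.edist_le g Set.self_mem_Ici (Set.mem_Ici.mpr (huv m h2).le))
      rw [habs, abs_sub_comm]
      refine le_trans ?_ (le_abs_self _)
      have := hu m h1
      have := hv (m + 1) h1'
      linarith
    · intro hdir
      have habs : |s (m + 1) - s m| = s m - s (m + 1) := by
        rw [abs_of_nonpos (by linarith)]; ring
      refine le_trans (ofReal_le_edist _ (g (v m)) (g (u (m + 1))) ?_)
        (eVariationOn.edist_le g Set.self_mem_Ici (Set.mem_Ici.mpr (hvu m h2).le))
      rw [habs]
      refine le_trans ?_ (le_abs_self _)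
      have := hv m h1
      have := hu (m + 1) h1'
      linarith
  | succ k ih =>
    intro m hm
    have h2 : m + 2 < M := by omega
    have h1 : m + 1 < M := by omega
    have h1' : m + 1 + 1 < M := by omega
    have hmlt : m < M - 2 := by omega
    have hsum : ∑ i ∈ Finset.Ico m (M - 2), |s (i + 1) - s i| =
        |s (m + 1) - s m| + ∑ i ∈ Finset.Ico (m + 1) (M - 2), |s (i + 1) - s i| :=
      Finset.sum_eq_sum_Ico_succ_bot hmlt _
    obtain ⟨ihU, ihD⟩ := ih (m + 1) (by omega)
    set F' := ∑ i ∈ Finset.Ico (m + 1) (M - 2), |s (i + 1) - s i| with hF'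
    constructor
    · intro hdir
      have habs : |s (m + 1) - s m| = s (m + 1) - s m := abs_of_nonneg (by linarith)
      rcases le_total (s (m + 1)) (s (m + 1 + 1)) with hd2 | hd2
      · -- continue upward through u (m+1)
        have hB := ihU hd2
        calc ENNReal.ofReal ((∑ i ∈ Finset.Ico m (M - 2), |s (i + 1) - s i|) + (s m - g (u m)))
            ≤ ENNReal.ofReal ((g (u (m + 1)) - g (u m)) + (F' + (s (m + 1) - g (u (m + 1))))) := by
              refine ENNReal.ofReal_le_ofReal ?_
              rw [hsum, habs]; linarith
          _ ≤ ENNReal.ofReal (g (u (m + 1)) - g (u m)) +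
                ENNReal.ofReal (F' + (s (m + 1) - g (u (m + 1)))) := ENNReal.ofReal_add_le
          _ ≤ edist (g (u m)) (g (u (m + 1))) + eVariationOn g (Set.Ici (u (m + 1))) := by
              refine add_le_add (ofReal_le_edist _ _ _ ?_) hB
              rw [abs_sub_comm]; exact le_abs_self _
          _ ≤ eVariationOn g (Set.Ici (u m)) := var_step g (huu m h2).le
      · -- local max: move to v (m+1)
        have hB := ihD hd2
        have hvm1 := hv (m + 1) h1'
        calc ENNReal.ofReal ((∑ i ∈ Finset.Ico m (M - 2), |s (i + 1) - s i|) + (s m - g (u m)))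
            ≤ ENNReal.ofReal ((g (v (m + 1)) - g (u m)) + (F' + (g (v (m + 1)) - s (m + 1)))) := by
              refine ENNReal.ofReal_le_ofReal ?_
              rw [hsum, habs]; linarith
          _ ≤ ENNReal.ofReal (g (v (m + 1)) - g (u m)) +
                ENNReal.ofReal (F' + (g (v (m + 1)) - s (m + 1))) := ENNReal.ofReal_add_le
          _ ≤ edist (g (u m)) (g (v (m + 1))) + eVariationOn g (Set.Ici (v (m + 1))) := by
              refine add_le_add (ofReal_le_edist _ _ _ ?_) hB
              rw [abs_sub_comm]; exact le_abs_self _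
          _ ≤ eVariationOn g (Set.Ici (u m)) := var_step g (huv m h2).le
    · intro hdir
      have habs : |s (m + 1) - s m| = s m - s (m + 1) := by
        rw [abs_of_nonpos (by linarith)]; ring
      rcases le_total (s (m + 1)) (s (m + 1 + 1)) with hd2 | hd2
      · -- local min: move to u (m+1)
        have hB := ihU hd2
        have hum1 := hu (m + 1) h1'
        calc ENNReal.ofReal ((∑ i ∈ Finset.Ico m (M - 2), |s (i + 1) - s i|) + (g (v m) - s m))
            ≤ ENNReal.ofReal ((g (v m) - g (u (m + 1))) + (F' + (s (m + 1) - g (u (m + 1))))) := by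
              refine ENNReal.ofReal_le_ofReal ?_
              rw [hsum, habs]; linarith
          _ ≤ ENNReal.ofReal (g (v m) - g (u (m + 1))) +
                ENNReal.ofReal (F' + (s (m + 1) - g (u (m + 1)))) := ENNReal.ofReal_add_le
          _ ≤ edist (g (v m)) (g (u (m + 1))) + eVariationOn g (Set.Ici (u (m + 1))) := by
              refine add_le_add (ofReal_le_edist _ _ _ ?_) hB
              exact le_abs_self _
          _ ≤ eVariationOn g (Set.Ici (v m)) := var_step g (hvu m h2).le
      · -- continue downward through v (m+1)
        have hB := ihD hd2
        calc ENNReal.ofReal ((∑ i ∈ Finset.Ico m (M - 2), |s (i + 1) - s i|) + (g (v m) - s m))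
            ≤ ENNReal.ofReal ((g (v m) - g (v (m + 1))) + (F' + (g (v (m + 1)) - s (m + 1)))) := by
              refine ENNReal.ofReal_le_ofReal ?_
              rw [hsum, habs]; linarith
          _ ≤ ENNReal.ofReal (g (v m) - g (v (m + 1))) +
                ENNReal.ofReal (F' + (g (v (m + 1)) - s (m + 1))) := ENNReal.ofReal_add_le
          _ ≤ edist (g (v m)) (g (v (m + 1))) + eVariationOn g (Set.Ici (v (m + 1))) := by
              refine add_le_add (ofReal_le_edist _ _ _ ?_) hB
              exact le_abs_self _
          _ ≤ eVariationOn g (Set.Ici (v m)) := var_step g (hvv m h2).le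

/-- any continuous piecewise-linear interpolant (continuous, differentiable
with derivative g off a finite knot set) has second-order total variation at least the
sum of the absolute jumps of the secant slopes. -/
theorem secondTV_ge_sum_slope_jumps (M : ℕ) (hM : 2 ≤ M) (x z : ℕ → ℝ)
    (hx : ∀ m, m + 1 < M → x m < x (m + 1))
    (s : ℕ → ℝ) (hs : ∀ m, s m = (z (m + 1) - z m) / (x (m + 1) - x m))
    (f g : ℝ → ℝ) (hfc : Continuous f)
    (K : Finset ℝ) (hder : ∀ t : ℝ, t ∉ K → HasDerivAt f (g t) t)
    (hint : ∀ m, m < M → f (x m) = z m) :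
    ENNReal.ofReal (∑ m ∈ Finset.range (M - 2), |s (m + 1) - s m|) ≤
      eVariationOn g Set.univ := by
  by_cases hM3 : 3 ≤ M
  · have hslope : ∀ m, m + 1 < M →
        (f (x (m + 1)) - f (x m)) / (x (m + 1) - x m) = s m := by
      intro m hm
      rw [hint (m + 1) hm, hint m (by omega), hs m]
    have Hu : ∀ m, ∃ t, m + 1 < M → (x m < t ∧ t < x (m + 1) ∧ g t ≤ s m) := by
      intro m
      by_cases hm : m + 1 < M
      · obtain ⟨t, ht, hgt⟩ := exists_le_slope f g hfc K hder (x m) (x (m + 1)) (hx m hm)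
        exact ⟨t, fun _ => ⟨ht.1, ht.2, by rwa [hslope m hm] at hgt⟩⟩
      · exact ⟨0, fun h => absurd h hm⟩
    have Hv : ∀ m, ∃ t, m + 1 < M → (x m < t ∧ t < x (m + 1) ∧ s m ≤ g t) := by
      intro m
      by_cases hm : m + 1 < M
      · obtain ⟨t, ht, hgt⟩ := exists_ge_slope f g hfc K hder (x m) (x (m + 1)) (hx m hm)
        exact ⟨t, fun _ => ⟨ht.1, ht.2, by rwa [hslope m hm] at hgt⟩⟩
      · exact ⟨0, fun h => absurd h hm⟩
    choose u hu using Hu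
    choose v hv using Hv
    obtain ⟨U, D⟩ := core g s u v M
      (fun m hm => (hu m hm).2.2) (fun m hm => (hv m hm).2.2)
      (fun m hm => ((hu m (by omega)).2.1.trans (hu (m + 1) hm).1))
      (fun m hm => ((hu m (by omega)).2.1.trans (hv (m + 1) hm).1))
      (fun m hm => ((hv m (by omega)).2.1.trans (hu (m + 1) hm).1))
      (fun m hm => ((hv m (by omega)).2.1.trans (hv (m + 1) hm).1))
      (M - 3) 0 (by omega)
    rw [Finset.range_eq_Ico]
    rcases le_total (s 0) (s (0 + 1)) with h | h
    · refine le_trans (le_trans (ENNReal.ofReal_le_ofReal ?_) (U h))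
        (eVariationOn.mono g (Set.subset_univ _))
      have := (hu 0 (by omega)).2.2
      linarith
    · refine le_trans (le_trans (ENNReal.ofReal_le_ofReal ?_) (D h))
        (eVariationOn.mono g (Set.subset_univ _))
      have := (hv 0 (by omega)).2.2
      linarith
  · have : M - 2 = 0 := by omega
    simp [this]
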